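/- ∫₀^1 sinh⁻¹(tan(πx/2)) dx = 4G/π, where G is Catalan's constant. -/

import Mathlib

open Real MeasureTheory Set

/-- `∫ u in Ioi 0, u * exp (-(c*u)) = 1/c²` for `c > 0`. -/
lemma integral_id_mul_exp_neg_mul {c : ℝ} (hc : 0 < c) :
    ∫ u in Ioi (0:ℝ), u * Real.exp (-(c * u)) = 1 / c ^ 2 := by
  have h := Real.integral_rpow_mul_exp_neg_mul_Ioi (a := 2) (r := c) two_pos hc
  rw [Real.Gamma_two, mul_one] at h
  have : ∀ t ∈ Ioi (0:ℝ), t ^ ((2:ℝ) - 1) * Real.exp (-(c * t)) = t * Real.exp (-(c * t)) := by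
    intro t ht
    rw [show (2:ℝ)-1 = 1 by norm_num, Real.rpow_one]
  rw [setIntegral_congr_fun measurableSet_Ioi this] at h
  rw [h, show ((2:ℝ)) = ((2:ℕ):ℝ) by norm_num, Real.rpow_natCast]
  norm_num

lemma integrable_id_mul_exp_neg_mul {c : ℝ} (hc : 0 < c) :
    IntegrableOn (fun u : ℝ => u * Real.exp (-(c * u))) (Ioi 0) := by
  have h := integrableOn_rpow_mul_exp_neg_mul_rpow (s := 1) (p := 1) (b := c)
    (by norm_num) one_pos hc
  refine h.congr_fun (fun x hx => ?_) measurableSet_Ioi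
  simp [Real.rpow_one]

lemma summable_aux : Summable (fun k : ℕ => (1:ℝ) / (1 + 2 * (k:ℝ)) ^ 2) := by
  have h : Summable (fun k : ℕ => (1:ℝ) / ((k:ℝ) + 1) ^ 2) := by
    have := (Real.summable_one_div_nat_pow (p := 2)).2 one_lt_two
    exact_mod_cast (summable_nat_add_iff 1).2 this
  refine h.of_nonneg_of_le (fun k => by positivity) (fun k => ?_)
  have h1 : (0:ℝ) < ((k:ℝ)+1)^2 := by positivity
  have h2 : ((k:ℝ)+1)^2 ≤ (1+2*(k:ℝ))^2 := by nlinarith [Nat.cast_nonneg (α := ℝ) k]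
  exact one_div_le_one_div_of_le h1 h2

/-- Key integral: `∫ u in Ioi 0, u / cosh u = 2 G`. -/
lemma integral_div_cosh :
    ∫ u in Ioi (0:ℝ), u / Real.cosh u
      = 2 * ∑' k : ℕ, (-1 : ℝ) ^ k / (1 + 2 * (k : ℝ)) ^ 2 := by
  set F : ℕ → ℝ → ℝ := fun k u => (2 * (-1:ℝ) ^ k) * (u * Real.exp (-((1 + 2 * k) * u))) with hF
  have hpos : ∀ k : ℕ, (0:ℝ) < 1 + 2 * k := fun k => by positivity
  have hFint : ∀ k : ℕ, IntegrableOn (F k) (Ioi 0) :=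
    fun k => (integrable_id_mul_exp_neg_mul (hpos k)).const_mul _
  have hFval : ∀ k : ℕ, ∫ u in Ioi (0:ℝ), F k u
      = 2 * ((-1:ℝ) ^ k / (1 + 2 * (k:ℝ)) ^ 2) := by
    intro k
    rw [hF]
    rw [MeasureTheory.integral_const_mul, integral_id_mul_exp_neg_mul (hpos k)]
    ring
  -- pointwise series identity
  have hsum : ∀ u ∈ Ioi (0:ℝ), ∑' k, F k u = u / Real.cosh u := by
    intro u hu
    have hu' : (0:ℝ) < u := hu
    have hx : ‖-Real.exp (-(2 * u))‖ < 1 := by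
      rw [norm_neg, Real.norm_eq_abs, abs_of_pos (Real.exp_pos _)]
      rw [Real.exp_lt_one_iff]
      linarith
    have hterm : ∀ k : ℕ, F k u
        = (2 * u * Real.exp (-u)) * (-Real.exp (-(2 * u))) ^ k := by
      intro k
      simp only [hF]
      have hexp : Real.exp (-((1 + 2*(k:ℝ)) * u))
          = Real.exp (-u) * Real.exp ((k:ℝ) * -(2*u)) := by
        rw [← Real.exp_add]; congr 1; ring
      rw [neg_pow (Real.exp (-(2*u))) k, ← Real.exp_nat_mul, hexp]
      ring
    rw [tsum_congr hterm, tsum_mul_left, tsum_geometric_of_norm_lt_one hx]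
    have hcosh : Real.cosh u = (Real.exp u + Real.exp (-u)) / 2 := Real.cosh_eq u
    have he : Real.exp u * Real.exp (-u) = 1 := by
      rw [← Real.exp_add]; simp
    have he2 : Real.exp (-(2*u)) = Real.exp (-u) * Real.exp (-u) := by
      rw [← Real.exp_add]; ring_nf
    have hch : Real.cosh u ≠ 0 := (Real.cosh_pos u).ne'
    have hden : 1 - -Real.exp (-(2*u)) ≠ 0 := by
      have := Real.exp_pos (-(2*u)); intro h; nlinarith
    field_simp [hcosh]
    nlinarith [Real.exp_pos u, Real.exp_pos (-u)]
  -- swap sum and integral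
  have hmeas : ∀ k : ℕ, AEStronglyMeasurable (F k) (volume.restrict (Ioi 0)) := by
    intro k
    apply Continuous.aestronglyMeasurable
    simp only [hF]
    fun_prop
  have hnorm : ∀ k : ℕ, ∫ u in Ioi (0:ℝ), ‖F k u‖ = 2 / (1 + 2 * (k:ℝ)) ^ 2 := by
    intro k
    have : ∀ u ∈ Ioi (0:ℝ), ‖F k u‖ = 2 * (u * Real.exp (-((1 + 2 * k) * u))) := by
      intro u hu
      have hu' : (0:ℝ) < u := hu
      simp only [hF, Real.norm_eq_abs, abs_mul, abs_pow, abs_neg, abs_one, one_pow, mul_one,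
        abs_two, abs_of_pos hu', abs_of_pos (Real.exp_pos _)]
    rw [setIntegral_congr_fun measurableSet_Ioi this,
      MeasureTheory.integral_const_mul, integral_id_mul_exp_neg_mul (hpos k)]
    ring
  have hlint : ∑' k : ℕ, ∫⁻ u in Ioi (0:ℝ), ‖F k u‖₊ ≠ ⊤ := by
    have heq : ∀ k : ℕ, ∫⁻ u in Ioi (0:ℝ), ‖F k u‖₊
        = ENNReal.ofReal (2 / (1 + 2 * (k:ℝ)) ^ 2) := by
      intro k
      simp_rw [← enorm_eq_nnnorm]
      rw [← MeasureTheory.ofReal_integral_norm_eq_lintegral_enorm (hFint k), hnorm k]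
    rw [tsum_congr heq]
    have hs : Summable (fun k : ℕ => (2:ℝ) / (1 + 2 * (k:ℝ)) ^ 2) := by
      have := summable_aux.mul_left 2
      simpa [mul_one_div, div_eq_mul_inv] using this
    rw [← ENNReal.ofReal_tsum_of_nonneg (fun k => by positivity) hs]
    exact ENNReal.ofReal_ne_top
  have hswap := MeasureTheory.integral_tsum (μ := volume.restrict (Ioi 0)) hmeas hlint
  calc ∫ u in Ioi (0:ℝ), u / Real.cosh u
      = ∫ u in Ioi (0:ℝ), ∑' k, F k u := by
        refine (setIntegral_congr_fun measurableSet_Ioi (fun u hu => ?_)).symm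
        exact hsum u hu
    _ = ∑' k, ∫ u in Ioi (0:ℝ), F k u := hswap
    _ = ∑' k : ℕ, 2 * ((-1:ℝ) ^ k / (1 + 2 * (k:ℝ)) ^ 2) := tsum_congr hFval
    _ = 2 * ∑' k : ℕ, (-1 : ℝ) ^ k / (1 + 2 * (k : ℝ)) ^ 2 := tsum_mul_left

theorem integral_arsinh_tan_eq_catalan :
    ∫ x in (0:ℝ)..1, Real.arsinh (Real.tan (Real.pi * x / 2))
      = 4 * (∑' k : ℕ, (-1 : ℝ) ^ k / (1 + 2 * (k : ℝ)) ^ 2) / Real.pi := by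
  have hπ : (0:ℝ) < π := Real.pi_pos
  set g : ℝ → ℝ := fun u => 2 / π * Real.arctan (Real.sinh u) with hg
  have himg : g '' Ioi 0 = Ioo 0 1 := by
    ext x
    constructor
    · rintro ⟨u, hu, rfl⟩
      have hu' : (0:ℝ) < u := hu
      have h1 : 0 < Real.arctan (Real.sinh u) := by
        have hs : 0 < Real.sinh u := Real.sinh_pos_iff.2 hu'
        simpa [Real.arctan_zero] using Real.arctan_strictMono hs
      have h2 : Real.arctan (Real.sinh u) < π / 2 := Real.arctan_lt_pi_div_two _
      refine ⟨mul_pos (by positivity) h1, ?_⟩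
      calc 2 / π * Real.arctan (Real.sinh u) < 2 / π * (π / 2) := by gcongr
        _ = 1 := by field_simp
    · rintro ⟨hx0, hx1⟩
      refine ⟨Real.arsinh (Real.tan (π * x / 2)), ?_, ?_⟩
      · have ht : 0 < Real.tan (π * x / 2) := by
          apply Real.tan_pos_of_pos_of_lt_pi_div_two
          · positivity
          · nlinarith
        rw [mem_Ioi, Real.arsinh_pos_iff]
        exact ht
      · rw [hg]
        simp only [Real.sinh_arsinh]
        rw [Real.arctan_tan (by nlinarith) (by nlinarith)]
        field_simp
  have hderiv : ∀ u ∈ Ioi (0:ℝ),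
      HasDerivWithinAt g (2 / π * (1 / Real.cosh u)) (Ioi 0) u := by
    intro u _
    have h1 : HasDerivAt (fun u : ℝ => Real.arctan (Real.sinh u))
        (1 / (1 + Real.sinh u ^ 2) * Real.cosh u) u :=
      (Real.hasDerivAt_arctan (Real.sinh u)).comp u (Real.hasDerivAt_sinh u)
    have h2 : 1 / (1 + Real.sinh u ^ 2) * Real.cosh u = 1 / Real.cosh u := by
      have hc := Real.cosh_pos u
      have : 1 + Real.sinh u ^ 2 = Real.cosh u ^ 2 := by
        rw [Real.cosh_sq]; ring
      rw [this]
      field_simp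
    rw [h2] at h1
    exact ((h1.const_mul (2 / π)).hasDerivWithinAt)
  have hinj : InjOn g (Ioi 0) := by
    intro a _ b _ hab
    rw [hg] at hab
    simp only at hab
    have h2π : (2:ℝ) / π ≠ 0 := by positivity
    have := mul_left_cancel₀ h2π hab
    exact Real.sinh_injective (Real.arctan_injective this)
  have hchg := integral_image_eq_integral_abs_deriv_smul measurableSet_Ioi hderiv hinj
    (fun x => Real.arsinh (Real.tan (π * x / 2)))
  rw [himg] at hchg
  have hcomp : ∀ u ∈ Ioi (0:ℝ),
      |2 / π * (1 / Real.cosh u)| • Real.arsinh (Real.tan (π * g u / 2))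
        = 2 / π * (u / Real.cosh u) := by
    intro u _
    have hc := Real.cosh_pos u
    have harg : π * g u / 2 = Real.arctan (Real.sinh u) := by
      rw [hg]; field_simp
    rw [harg, Real.tan_arctan, Real.arsinh_sinh, abs_of_pos (by positivity), smul_eq_mul]
    field_simp
  rw [setIntegral_congr_fun measurableSet_Ioi hcomp] at hchg
  rw [intervalIntegral.integral_of_le zero_le_one, MeasureTheory.integral_Ioc_eq_integral_Ioo,
    hchg, MeasureTheory.integral_const_mul, integral_div_cosh]
  field_simp
  ring
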